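/- For all natural numbers n ≥ 0, the factor complexity of the Thue–Morse sequence satisfies f_t(16n+15) = 2·f_t(8n+2) − 6·f_t(8n+4) + 6·f_t(8n+6) (as an identity of integers). -/
import Mathlib


/-- The Thue–Morse sequence: `tm n` is the parity of the number of 1s in the
binary representation of `n`. -/
def tm (n : ℕ) : ℕ := (Nat.digits 2 n).sum % 2

/-- The factor complexity of the Thue–Morse sequence: the number of distinct
blocks of length `n` occurring in it. -/
noncomputable def tmComplexity (n : ℕ) : ℕ :=
  Set.ncard {w : Fin n → ℕ | ∃ i : ℕ, ∀ j : Fin n, w j = tm (i + j)}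

namespace TMProofAux


lemma tm_le_one (n : ℕ) : tm n ≤ 1 := by
  have : tm n < 2 := Nat.mod_lt _ (by norm_num)
  omega

lemma tm_two_mul (n : ℕ) : tm (2 * n) = tm n := by
  rcases Nat.eq_zero_or_pos n with h | h
  · simp [h]
  · unfold tm
    rw [Nat.digits_def' (by norm_num : 1 < 2) (by omega)]
    have h1 : 2 * n % 2 = 0 := by omega
    have h2 : 2 * n / 2 = n := by omega
    rw [h1, h2, List.sum_cons, Nat.zero_add]

lemma tm_two_mul_add_one (n : ℕ) : tm (2 * n + 1) = 1 - tm n := by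
  unfold tm
  rw [Nat.digits_def' (by norm_num : 1 < 2) (by omega)]
  have h1 : (2 * n + 1) % 2 = 1 := by omega
  have h2 : (2 * n + 1) / 2 = n := by omega
  rw [h1, h2, List.sum_cons]
  omega

lemma tm_step (n : ℕ) : tm n = (tm (n / 2) + n) % 2 := by
  rcases Nat.even_or_odd n with ⟨a, ha⟩ | ⟨a, ha⟩
  · have h1 : n = 2 * a := by omega
    subst h1
    have h2 : 2 * a / 2 = a := by omega
    rw [h2, tm_two_mul]
    have := tm_le_one a
    omega
  · subst ha
    have h2 : (2 * a + 1) / 2 = a := by omega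
    rw [h2, tm_two_mul_add_one]
    have := tm_le_one a
    omega

lemma no_triple (i : ℕ) : tm i ≠ tm (i + 1) ∨ tm (i + 1) ≠ tm (i + 2) := by
  rcases Nat.even_or_odd i with ⟨k, hk⟩ | ⟨k, hk⟩
  · left
    have h1 : tm i = tm k := by rw [show i = 2 * k by omega, tm_two_mul]
    have h2 : tm (i + 1) = 1 - tm k := by
      rw [show i + 1 = 2 * k + 1 by omega, tm_two_mul_add_one]
    have := tm_le_one k
    omega
  · right
    have h1 : tm (i + 1) = tm (k + 1) := by
      rw [show i + 1 = 2 * (k + 1) by omega, tm_two_mul]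
    have h2 : tm (i + 2) = 1 - tm (k + 1) := by
      rw [show i + 2 = 2 * (k + 1) + 1 by omega, tm_two_mul_add_one]
    have := tm_le_one (k + 1)
    omega

def F (n : ℕ) : Set (Fin n → ℕ) := {w | ∃ i : ℕ, ∀ j : Fin n, w j = tm (i + j)}

lemma mem_F_le_one {n : ℕ} {w : Fin n → ℕ} (hw : w ∈ F n) (j : Fin n) : w j ≤ 1 := by
  obtain ⟨i, hi⟩ := hw
  rw [hi j]; exact tm_le_one _

lemma F_finite (n : ℕ) : (F n).Finite := by
  apply Set.Finite.subset (Set.Finite.pi (fun _ : Fin n => Set.finite_Iic 1))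
  intro w hw
  exact fun j _ => mem_F_le_one hw j

def Emap (m : ℕ) (v : Fin m → ℕ) : Fin (2 * m) → ℕ :=
  fun j => (v ⟨j.val / 2, by have := j.isLt; omega⟩ + j.val) % 2

def Omap (m : ℕ) (v : Fin (m + 1) → ℕ) : Fin (2 * m) → ℕ :=
  fun j => (v ⟨(j.val + 1) / 2, by have := j.isLt; omega⟩ + j.val + 1) % 2

def Emap' (m : ℕ) (v : Fin (m + 1) → ℕ) : Fin (2 * m + 1) → ℕ :=
  fun j => (v ⟨j.val / 2, by have := j.isLt; omega⟩ + j.val) % 2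

def Omap' (m : ℕ) (v : Fin (m + 1) → ℕ) : Fin (2 * m + 1) → ℕ :=
  fun j => (v ⟨(j.val + 1) / 2, by have := j.isLt; omega⟩ + j.val + 1) % 2

lemma even_cover (m : ℕ) : F (2 * m) = Emap m '' F m ∪ Omap m '' F (m + 1) := by
  ext w
  constructor
  · rintro ⟨i, hi⟩
    rcases Nat.even_or_odd i with ⟨k, hk⟩ | ⟨k, hk⟩
    · left
      refine ⟨fun q => tm (k + q), ⟨k, fun q => rfl⟩, ?_⟩
      funext j
      have hj := j.isLt
      show (tm (k + j.val / 2) + j.val) % 2 = w j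
      rw [hi j, tm_step (i + j.val)]
      have e1 : (i + j.val) / 2 = k + j.val / 2 := by omega
      rw [e1]
      omega
    · right
      refine ⟨fun q => tm (k + q), ⟨k, fun q => rfl⟩, ?_⟩
      funext j
      have hj := j.isLt
      show (tm (k + (j.val + 1) / 2) + j.val + 1) % 2 = w j
      rw [hi j, tm_step (i + j.val)]
      have e1 : (i + j.val) / 2 = k + (j.val + 1) / 2 := by omega
      rw [e1]
      omega
  · rintro (⟨v, ⟨i, hv⟩, rfl⟩ | ⟨v, ⟨i, hv⟩, rfl⟩)
    · refine ⟨2 * i, fun j => ?_⟩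
      have hj := j.isLt
      show (v ⟨j.val / 2, by omega⟩ + j.val) % 2 = tm (2 * i + j.val)
      rw [hv, tm_step (2 * i + j.val)]
      show (tm (i + j.val / 2) + j.val) % 2 = _
      have e1 : (2 * i + j.val) / 2 = i + j.val / 2 := by omega
      rw [e1]
      omega
    · refine ⟨2 * i + 1, fun j => ?_⟩
      have hj := j.isLt
      show (v ⟨(j.val + 1) / 2, by omega⟩ + j.val + 1) % 2 = tm (2 * i + 1 + j.val)
      rw [hv, tm_step (2 * i + 1 + j.val)]
      show (tm (i + (j.val + 1) / 2) + j.val + 1) % 2 = _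
      have e1 : (2 * i + 1 + j.val) / 2 = i + (j.val + 1) / 2 := by omega
      rw [e1]
      omega

lemma odd_cover (m : ℕ) : F (2 * m + 1) = Emap' m '' F (m + 1) ∪ Omap' m '' F (m + 1) := by
  ext w
  constructor
  · rintro ⟨i, hi⟩
    rcases Nat.even_or_odd i with ⟨k, hk⟩ | ⟨k, hk⟩
    · left
      refine ⟨fun q => tm (k + q), ⟨k, fun q => rfl⟩, ?_⟩
      funext j
      have hj := j.isLt
      show (tm (k + j.val / 2) + j.val) % 2 = w j
      rw [hi j, tm_step (i + j.val)]
      have e1 : (i + j.val) / 2 = k + j.val / 2 := by omega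
      rw [e1]; omega
    · right
      refine ⟨fun q => tm (k + q), ⟨k, fun q => rfl⟩, ?_⟩
      funext j
      have hj := j.isLt
      show (tm (k + (j.val + 1) / 2) + j.val + 1) % 2 = w j
      rw [hi j, tm_step (i + j.val)]
      have e1 : (i + j.val) / 2 = k + (j.val + 1) / 2 := by omega
      rw [e1]; omega
  · rintro (⟨v, ⟨i, hv⟩, rfl⟩ | ⟨v, ⟨i, hv⟩, rfl⟩)
    · refine ⟨2 * i, fun j => ?_⟩
      have hj := j.isLt
      show (v ⟨j.val / 2, by omega⟩ + j.val) % 2 = tm (2 * i + j.val)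
      rw [hv, tm_step (2 * i + j.val)]
      show (tm (i + j.val / 2) + j.val) % 2 = _
      have e1 : (2 * i + j.val) / 2 = i + j.val / 2 := by omega
      rw [e1]; omega
    · refine ⟨2 * i + 1, fun j => ?_⟩
      have hj := j.isLt
      show (v ⟨(j.val + 1) / 2, by omega⟩ + j.val + 1) % 2 = tm (2 * i + 1 + j.val)
      rw [hv, tm_step (2 * i + 1 + j.val)]
      show (tm (i + (j.val + 1) / 2) + j.val + 1) % 2 = _
      have e1 : (2 * i + 1 + j.val) / 2 = i + (j.val + 1) / 2 := by omega
      rw [e1]; omega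

lemma Emap_injOn (m : ℕ) : Set.InjOn (Emap m) (F m) := by
  intro u hu v hv h
  funext q
  have hq := q.isLt
  have h1 := mem_F_le_one hu q
  have h2 := mem_F_le_one hv q
  have h3 := congrFun h ⟨2 * q.val, by omega⟩
  have e : (⟨2 * q.val / 2, by omega⟩ : Fin m) = q := Fin.ext (by show 2 * q.val / 2 = q.val; omega)
  have h4 : (u ⟨2 * q.val / 2, by omega⟩ + 2 * q.val) % 2
      = (v ⟨2 * q.val / 2, by omega⟩ + 2 * q.val) % 2 := h3
  rw [e] at h4
  omega

lemma Omap_injOn (m : ℕ) (hm : 1 ≤ m) : Set.InjOn (Omap m) (F (m + 1)) := by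
  intro u hu v hv h
  funext q
  have hq := q.isLt
  have h1 := mem_F_le_one hu q
  have h2 := mem_F_le_one hv q
  rcases Nat.lt_or_ge q.val m with hlt | hge
  · have h3 := congrFun h ⟨2 * q.val, by omega⟩
    have e : (⟨(2 * q.val + 1) / 2, by omega⟩ : Fin (m + 1)) = q :=
      Fin.ext (by show (2 * q.val + 1) / 2 = q.val; omega)
    have h4 : (u ⟨(2 * q.val + 1) / 2, by omega⟩ + 2 * q.val + 1) % 2
        = (v ⟨(2 * q.val + 1) / 2, by omega⟩ + 2 * q.val + 1) % 2 := h3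
    rw [e] at h4
    omega
  · have h3 := congrFun h ⟨2 * m - 1, by omega⟩
    have e : (⟨(2 * m - 1 + 1) / 2, by omega⟩ : Fin (m + 1)) = q :=
      Fin.ext (by show (2 * m - 1 + 1) / 2 = q.val; omega)
    have h4 : (u ⟨(2 * m - 1 + 1) / 2, by omega⟩ + (2 * m - 1) + 1) % 2
        = (v ⟨(2 * m - 1 + 1) / 2, by omega⟩ + (2 * m - 1) + 1) % 2 := h3
    rw [e] at h4
    omega

lemma Emap'_injOn (m : ℕ) : Set.InjOn (Emap' m) (F (m + 1)) := by
  intro u hu v hv h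
  funext q
  have hq := q.isLt
  have h1 := mem_F_le_one hu q
  have h2 := mem_F_le_one hv q
  have h3 := congrFun h ⟨2 * q.val, by omega⟩
  have e : (⟨2 * q.val / 2, by omega⟩ : Fin (m + 1)) = q :=
    Fin.ext (by show 2 * q.val / 2 = q.val; omega)
  have h4 : (u ⟨2 * q.val / 2, by omega⟩ + 2 * q.val) % 2
      = (v ⟨2 * q.val / 2, by omega⟩ + 2 * q.val) % 2 := h3
  rw [e] at h4
  omega

lemma Omap'_injOn (m : ℕ) : Set.InjOn (Omap' m) (F (m + 1)) := by
  intro u hu v hv h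
  funext q
  have hq := q.isLt
  have h1 := mem_F_le_one hu q
  have h2 := mem_F_le_one hv q
  have h3 := congrFun h ⟨2 * q.val, by omega⟩
  have e : (⟨(2 * q.val + 1) / 2, by omega⟩ : Fin (m + 1)) = q :=
    Fin.ext (by show (2 * q.val + 1) / 2 = q.val; omega)
  have h4 : (u ⟨(2 * q.val + 1) / 2, by omega⟩ + 2 * q.val + 1) % 2
      = (v ⟨(2 * q.val + 1) / 2, by omega⟩ + 2 * q.val + 1) % 2 := h3
  rw [e] at h4
  omega

lemma const_not_mem {m : ℕ} (hm : 2 ≤ m) {v : Fin (m + 1) → ℕ}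
    (hv : v ∈ F (m + 1))
    (hc : ∀ q : Fin (m + 1), ∀ hq : q.val < m, v ⟨q.val + 1, by omega⟩ = v q) :
    False := by
  obtain ⟨i, hi⟩ := hv
  have e0 : v ⟨0, by omega⟩ = tm i := by
    have := hi ⟨0, by omega⟩
    simpa using this
  have e1 : v ⟨1, by omega⟩ = tm (i + 1) := hi ⟨1, by omega⟩
  have e2 : v ⟨2, by omega⟩ = tm (i + 2) := hi ⟨2, by omega⟩
  have c1 : v ⟨1, by omega⟩ = v ⟨0, by omega⟩ := hc ⟨0, by omega⟩ (show (0:ℕ) < m by omega)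
  have c2 : v ⟨2, by omega⟩ = v ⟨1, by omega⟩ := hc ⟨1, by omega⟩ (show (1:ℕ) < m by omega)
  rcases no_triple i with h | h
  · exact h (by omega)
  · exact h (by omega)

lemma even_disjoint (m : ℕ) (hm : 2 ≤ m) :
    Disjoint (Emap m '' F m) (Omap m '' F (m + 1)) := by
  rw [Set.disjoint_left]
  rintro w ⟨u, hu, rfl⟩ ⟨v, hv, hvw⟩
  refine const_not_mem hm hv (fun q hq => ?_)
  have h1 := mem_F_le_one hu ⟨q.val, hq⟩
  have h2 := mem_F_le_one hv q
  have h3 := mem_F_le_one hv ⟨q.val + 1, by omega⟩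
  -- even position 2*q : relates u q and v q
  have b1 : (v ⟨(2 * q.val + 1) / 2, by omega⟩ + 2 * q.val + 1) % 2
      = (u ⟨2 * q.val / 2, by omega⟩ + 2 * q.val) % 2 := congrFun hvw ⟨2 * q.val, by omega⟩
  have eu1 : (⟨2 * q.val / 2, by omega⟩ : Fin m) = ⟨q.val, hq⟩ :=
    Fin.ext (show 2 * q.val / 2 = q.val by omega)
  have ev1 : (⟨(2 * q.val + 1) / 2, by omega⟩ : Fin (m + 1)) = q :=
    Fin.ext (show (2 * q.val + 1) / 2 = q.val by omega)
  simp only [eu1, ev1] at b1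
  -- odd position 2*q+1 : relates u q and v (q+1)
  have b2 : (v ⟨(2 * q.val + 1 + 1) / 2, by omega⟩ + (2 * q.val + 1) + 1) % 2
      = (u ⟨(2 * q.val + 1) / 2, by omega⟩ + (2 * q.val + 1)) % 2 :=
    congrFun hvw ⟨2 * q.val + 1, by omega⟩
  have eu2 : (⟨(2 * q.val + 1) / 2, by omega⟩ : Fin m) = ⟨q.val, hq⟩ :=
    Fin.ext (show (2 * q.val + 1) / 2 = q.val by omega)
  have ev2 : (⟨(2 * q.val + 1 + 1) / 2, by omega⟩ : Fin (m + 1)) = ⟨q.val + 1, by omega⟩ :=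
    Fin.ext (show (2 * q.val + 1 + 1) / 2 = q.val + 1 by omega)
  simp only [eu2, ev2] at b2
  omega

lemma odd_disjoint (m : ℕ) (hm : 2 ≤ m) :
    Disjoint (Emap' m '' F (m + 1)) (Omap' m '' F (m + 1)) := by
  rw [Set.disjoint_left]
  rintro w ⟨u, hu, rfl⟩ ⟨v, hv, hvw⟩
  refine const_not_mem hm hv (fun q hq => ?_)
  have h1 := mem_F_le_one hu q
  have h2 := mem_F_le_one hv q
  have h3 := mem_F_le_one hv ⟨q.val + 1, by omega⟩
  have b1 : (v ⟨(2 * q.val + 1) / 2, by omega⟩ + 2 * q.val + 1) % 2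
      = (u ⟨2 * q.val / 2, by omega⟩ + 2 * q.val) % 2 := congrFun hvw ⟨2 * q.val, by omega⟩
  have eu1 : (⟨2 * q.val / 2, by omega⟩ : Fin (m + 1)) = q :=
    Fin.ext (show 2 * q.val / 2 = q.val by omega)
  have ev1 : (⟨(2 * q.val + 1) / 2, by omega⟩ : Fin (m + 1)) = q :=
    Fin.ext (show (2 * q.val + 1) / 2 = q.val by omega)
  simp only [eu1, ev1] at b1
  have b2 : (v ⟨(2 * q.val + 1 + 1) / 2, by omega⟩ + (2 * q.val + 1) + 1) % 2
      = (u ⟨(2 * q.val + 1) / 2, by omega⟩ + (2 * q.val + 1)) % 2 :=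
    congrFun hvw ⟨2 * q.val + 1, by omega⟩
  have eu2 : (⟨(2 * q.val + 1) / 2, by omega⟩ : Fin (m + 1)) = q :=
    Fin.ext (show (2 * q.val + 1) / 2 = q.val by omega)
  have ev2 : (⟨(2 * q.val + 1 + 1) / 2, by omega⟩ : Fin (m + 1)) = ⟨q.val + 1, by omega⟩ :=
    Fin.ext (show (2 * q.val + 1 + 1) / 2 = q.val + 1 by omega)
  simp only [eu2, ev2] at b2
  omega

lemma tmComplexity_eq (n : ℕ) : tmComplexity n = (F n).ncard := rfl

lemma even_rec (m : ℕ) (hm : 2 ≤ m) :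
    tmComplexity (2 * m) = tmComplexity m + tmComplexity (m + 1) := by
  rw [tmComplexity_eq, tmComplexity_eq, tmComplexity_eq, even_cover m,
    Set.ncard_union_eq (even_disjoint m hm) ((F_finite m).image _) ((F_finite (m + 1)).image _),
    Set.ncard_image_of_injOn (Emap_injOn m),
    Set.ncard_image_of_injOn (Omap_injOn m (by omega))]

lemma odd_rec (m : ℕ) (hm : 2 ≤ m) :
    tmComplexity (2 * m + 1) = 2 * tmComplexity (m + 1) := by
  rw [tmComplexity_eq, tmComplexity_eq, odd_cover m,
    Set.ncard_union_eq (odd_disjoint m hm) ((F_finite (m + 1)).image _) ((F_finite (m + 1)).image _),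
    Set.ncard_image_of_injOn (Emap'_injOn m),
    Set.ncard_image_of_injOn (Omap'_injOn m)]
  omega

lemma odd_rec' (a b : ℕ) (h1 : a = 2 * b + 1) (h2 : 2 ≤ b) :
    tmComplexity a = 2 * tmComplexity (b + 1) := by
  subst h1; exact odd_rec b h2

lemma even_rec' (a b : ℕ) (h1 : a = 2 * b) (h2 : 2 ≤ b) :
    tmComplexity a = tmComplexity b + tmComplexity (b + 1) := by
  subst h1; exact even_rec b h2

end TMProofAux

theorem stmt_19 (n : ℕ) :
    (tmComplexity (16 * n + 15) : ℤ) =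
      2 * tmComplexity (8 * n + 2) - 6 * tmComplexity (8 * n + 4)
        + 6 * tmComplexity (8 * n + 6) := by
  open TMProofAux in
  rcases Nat.eq_zero_or_pos n with rfl | hn
  · have h1 : tmComplexity 15 = 2 * tmComplexity 8 := odd_rec' 15 7 (by norm_num) (by norm_num)
    have h2 : tmComplexity 8 = tmComplexity 4 + tmComplexity 5 :=
      even_rec' 8 4 (by norm_num) (by norm_num)
    have h3 : tmComplexity 5 = 2 * tmComplexity 3 := odd_rec' 5 2 (by norm_num) (by norm_num)
    have h4 : tmComplexity 4 = tmComplexity 2 + tmComplexity 3 :=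
      even_rec' 4 2 (by norm_num) (by norm_num)
    have h5 : tmComplexity 6 = tmComplexity 3 + tmComplexity 4 :=
      even_rec' 6 3 (by norm_num) (by norm_num)
    norm_num
    omega
  · have h1 : tmComplexity (16 * n + 15) = 2 * tmComplexity (8 * n + 7 + 1) :=
      odd_rec' _ (8 * n + 7) (by ring) (by omega)
    have h2 : tmComplexity (8 * n + 8) = tmComplexity (4 * n + 4) + tmComplexity (4 * n + 4 + 1) :=
      even_rec' _ (4 * n + 4) (by ring) (by omega)
    have h3 : tmComplexity (4 * n + 5) = 2 * tmComplexity (2 * n + 2 + 1) :=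
      odd_rec' _ (2 * n + 2) (by ring) (by omega)
    have h4 : tmComplexity (4 * n + 4) = tmComplexity (2 * n + 2) + tmComplexity (2 * n + 2 + 1) :=
      even_rec' _ (2 * n + 2) (by ring) (by omega)
    have h5 : tmComplexity (8 * n + 2) = tmComplexity (4 * n + 1) + tmComplexity (4 * n + 1 + 1) :=
      even_rec' _ (4 * n + 1) (by ring) (by omega)
    have h6 : tmComplexity (4 * n + 1) = 2 * tmComplexity (2 * n + 1) :=
      odd_rec' _ (2 * n) (by ring) (by omega)
    have h7 : tmComplexity (4 * n + 2) = tmComplexity (2 * n + 1) + tmComplexity (2 * n + 1 + 1) :=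
      even_rec' _ (2 * n + 1) (by ring) (by omega)
    have h8 : tmComplexity (8 * n + 4) = tmComplexity (4 * n + 2) + tmComplexity (4 * n + 2 + 1) :=
      even_rec' _ (4 * n + 2) (by ring) (by omega)
    have h9 : tmComplexity (4 * n + 3) = 2 * tmComplexity (2 * n + 1 + 1) :=
      odd_rec' _ (2 * n + 1) (by ring) (by omega)
    have h10 : tmComplexity (8 * n + 6) = tmComplexity (4 * n + 3) + tmComplexity (4 * n + 3 + 1) :=
      even_rec' _ (4 * n + 3) (by ring) (by omega)
    have e1 : 8 * n + 7 + 1 = 8 * n + 8 := by ring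
    have e2 : 4 * n + 4 + 1 = 4 * n + 5 := by ring
    have e3 : 2 * n + 2 + 1 = 2 * n + 3 := by ring
    have e4 : 4 * n + 1 + 1 = 4 * n + 2 := by ring
    have e5 : 2 * n + 1 + 1 = 2 * n + 2 := by ring
    have e6 : 4 * n + 2 + 1 = 4 * n + 3 := by ring
    have e7 : 4 * n + 3 + 1 = 4 * n + 4 := by ring
    rw [e1] at h1
    rw [e2] at h2
    rw [e3] at h3 h4
    rw [e4] at h5
    rw [e5] at h7 h9
    rw [e6] at h8
    rw [e7] at h10
    omega
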